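/- arXiv:quant-ph/9703004 — 2 statements merged into one kernel-verified Lean document; each statement's English description precedes it below -/
import Mathlib

section
/- Let ρ be a separable state on ℂ^{m₁} ⊗ ℂ^{m₂} with m = m₁m₂. Then there exist N ≤ m² product unit vectors ψ_i ⊗ φ_k and probabilities p_{ik} such that simultaneously ρ = Σ p_{ik} |ψ_i ⊗ φ_k⟩⟨ψ_i ⊗ φ_k| and ρ^{T₂} = Σ p_{ik} |ψ_i ⊗ φ_k*⟩⟨ψ_i ⊗ φ_k*|, where φ* denotes the componentwise complex conjugate of φ in the standard basis. -/
open scoped ComplexOrder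
open Matrix Kronecker

noncomputable section

/-- A quantum state: a positive semidefinite complex matrix of trace 1. -/
def IsState {n : Type*} [Fintype n] [DecidableEq n] (ρ : Matrix n n ℂ) : Prop :=
  ρ.PosSemidef ∧ ρ.trace = 1

/-- Separability: membership in the closure of the convex hull of Kronecker
products of states. -/
def IsSepState {m₁ m₂ : ℕ}
    (ρ : Matrix (Fin m₁ × Fin m₂) (Fin m₁ × Fin m₂) ℂ) : Prop :=
  ρ ∈ closure (convexHull ℝ
    {σ : Matrix (Fin m₁ × Fin m₂) (Fin m₁ × Fin m₂) ℂ |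
      ∃ (A : Matrix (Fin m₁) (Fin m₁) ℂ) (B : Matrix (Fin m₂) (Fin m₂) ℂ),
        IsState A ∧ IsState B ∧ σ = A ⊗ₖ B})

/-- The rank-one operator `|ψ⟩⟨ψ|` (orthogonal projection on `span ψ` for unit `ψ`). -/
def proj {n : Type*} (ψ : n → ℂ) : Matrix n n ℂ :=
  fun i j => ψ i * star (ψ j)

/-- The tensor (Kronecker) product of two vectors. -/
def tens {m₁ m₂ : ℕ} (ψ : Fin m₁ → ℂ) (φ : Fin m₂ → ℂ) :
    Fin m₁ × Fin m₂ → ℂ := fun p => ψ p.1 * φ p.2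

/-- Partial transposition on the second factor. -/
def pt₂ {m₁ m₂ : ℕ} (ρ : Matrix (Fin m₁ × Fin m₂) (Fin m₁ × Fin m₂) ℂ) :
    Matrix (Fin m₁ × Fin m₂) (Fin m₁ × Fin m₂) ℂ :=
  fun p q => ρ (p.1, q.2) (q.1, p.2)

lemma mul_star_self' (z : ℂ) : z * star z = ((‖z‖^2 : ℝ) : ℂ) := by
  rw [show (star z) = (starRingEnd ℂ) z from rfl, Complex.mul_conj]
  rw [Complex.normSq_eq_norm_sq]

lemma star_mul_self' (z : ℂ) : star z * z = ((‖z‖^2 : ℝ) : ℂ) := by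
  rw [mul_comm]; exact mul_star_self' z

lemma rcl_ofReal (x : ℝ) : (RCLike.ofReal x : ℂ) = (x : ℂ) := rfl

section helpers
variable {n : Type*} [Fintype n] [DecidableEq n]

lemma proj_trace (v : n → ℂ) : (proj v).trace = ((∑ i, ‖v i‖^2 : ℝ) : ℂ) := by
  simp only [Matrix.trace, Matrix.diag, proj, Complex.ofReal_sum]
  exact Finset.sum_congr rfl fun i _ => mul_star_self' _

lemma state_decomp {A : Matrix n n ℂ} (hA : IsState A) :
    ∃ (v : n → n → ℂ) (e : n → ℝ),
      (∀ j, ∑ i, ‖v j i‖^2 = 1) ∧ (∀ j, 0 ≤ e j) ∧ (∑ j, e j) = 1 ∧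
      A = ∑ j, (e j : ℂ) • proj (v j) := by
  obtain ⟨hpsd, htr⟩ := hA
  have hH := hpsd.1
  have hspec := hH.spectral_theorem
  have hsUU : star (hH.eigenvectorUnitary : Matrix n n ℂ) * (hH.eigenvectorUnitary : Matrix n n ℂ) = 1 :=
    Unitary.coe_star_mul_self hH.eigenvectorUnitary
  set U : Matrix n n ℂ := (hH.eigenvectorUnitary : Matrix n n ℂ) with hU
  clear_value U
  have hunit : ∀ j, ∑ i, ‖U i j‖^2 = 1 := by
    intro j
    have h1 : (star U * U) j j = (1 : Matrix n n ℂ) j j := by rw [hsUU]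
    rw [Matrix.mul_apply] at h1
    simp only [Matrix.star_apply, star_mul_self'] at h1
    rw [Matrix.one_apply_eq] at h1
    rw [← Complex.ofReal_sum] at h1
    exact_mod_cast h1
  have hdecomp : A = ∑ j, (hH.eigenvalues j : ℂ) • proj (fun i => U i j) := by
    conv_lhs => rw [hspec, Unitary.conjStarAlgAut_apply, ← hU]
    ext i i'
    simp only [Matrix.sum_apply, Matrix.smul_apply, smul_eq_mul, proj, Matrix.mul_apply,
      Matrix.mul_diagonal, Matrix.star_apply, Matrix.diagonal_apply, Function.comp_apply,
      mul_ite, mul_zero, Finset.sum_ite_eq', Finset.mem_univ, if_true, rcl_ofReal]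
    exact Finset.sum_congr rfl fun k _ => by ring
  refine ⟨fun j i => U i j, hH.eigenvalues, hunit, fun j => hpsd.eigenvalues_nonneg j, ?_, hdecomp⟩
  have h2 : A.trace = ((∑ j, hH.eigenvalues j : ℝ) : ℂ) := by
    conv_lhs => rw [hdecomp]
    rw [Matrix.trace_sum]
    simp only [Matrix.trace_smul, proj_trace, smul_eq_mul, hunit, Complex.ofReal_one, mul_one,
      Complex.ofReal_sum]
  exact_mod_cast h2.symm.trans htr

end helpers

section main
variable {m₁ m₂ : ℕ}

/-- The set of pure product states. -/
def pureProd (m₁ m₂ : ℕ) : Set (Matrix (Fin m₁ × Fin m₂) (Fin m₁ × Fin m₂) ℂ) :=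
  (fun x : (Fin m₁ → ℂ) × (Fin m₂ → ℂ) => proj (tens x.1 x.2)) ''
    ({ψ | ∑ j, ‖ψ j‖^2 = 1} ×ˢ {φ | ∑ j, ‖φ j‖^2 = 1})

lemma prodState_mem_convexHull {A : Matrix (Fin m₁) (Fin m₁) ℂ}
    {B : Matrix (Fin m₂) (Fin m₂) ℂ} (hA : IsState A) (hB : IsState B) :
    A ⊗ₖ B ∈ convexHull ℝ (pureProd m₁ m₂) := by
  obtain ⟨v, e, hv, he0, he1, hAe⟩ := state_decomp hA
  obtain ⟨w, f, hw, hf0, hf1, hBf⟩ := state_decomp hB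
  have hkron : A ⊗ₖ B =
      ∑ jk : Fin m₁ × Fin m₂, (e jk.1 * f jk.2) • proj (tens (v jk.1) (w jk.2)) := by
    ext ⟨i, μ⟩ ⟨i', μ'⟩
    rw [Matrix.kroneckerMap_apply, hAe, hBf]
    simp only [Matrix.sum_apply, Matrix.smul_apply, smul_eq_mul, proj, tens,
      Complex.real_smul, Finset.sum_mul_sum, Fintype.sum_prod_type, star_mul']
    push_cast
    refine Finset.sum_congr rfl fun j _ => Finset.sum_congr rfl fun k _ => by ring
  have hsum : ∑ jk : Fin m₁ × Fin m₂, e jk.1 * f jk.2 = 1 := by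
    rw [Fintype.sum_prod_type]
    simp [← Finset.mul_sum, hf1, he1]
  have hmem := Finset.centerMass_mem_convexHull (Finset.univ)
    (w := fun jk : Fin m₁ × Fin m₂ => e jk.1 * f jk.2)
    (z := fun jk : Fin m₁ × Fin m₂ => proj (tens (v jk.1) (w jk.2)))
    (fun jk _ => mul_nonneg (he0 _) (hf0 _)) (by rw [hsum]; norm_num)
    (fun jk _ => Set.mem_image_of_mem
      (fun x : (Fin m₁ → ℂ) × (Fin m₂ → ℂ) => proj (tens x.1 x.2))
      (Set.mk_mem_prod (show v jk.1 ∈ {ψ : Fin m₁ → ℂ | ∑ j, ‖ψ j‖^2 = 1} from hv jk.1)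
        (show w jk.2 ∈ {φ : Fin m₂ → ℂ | ∑ j, ‖φ j‖^2 = 1} from hw jk.2)))
  rwa [Finset.centerMass_eq_of_sum_1 _ _ hsum, ← hkron] at hmem

end main

lemma sphere_isCompact (m : ℕ) : IsCompact {ψ : Fin m → ℂ | ∑ j, ‖ψ j‖^2 = 1} := by
  apply Metric.isCompact_of_isClosed_isBounded
  · exact isClosed_eq (by fun_prop) continuous_const
  · apply Bornology.IsBounded.subset (Metric.isBounded_closedBall (x := (0 : Fin m → ℂ)) (r := 1))
    intro ψ hψ
    rw [Metric.mem_closedBall, dist_zero_right]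
    rw [pi_norm_le_iff_of_nonneg zero_le_one]
    intro j
    have h1 : ‖ψ j‖^2 ≤ 1 := by
      rw [← hψ]
      exact Finset.single_le_sum (f := fun j => ‖ψ j‖^2)
        (fun i _ => sq_nonneg _) (Finset.mem_univ j)
    exact (pow_le_one_iff_of_nonneg (norm_nonneg _) two_ne_zero).mp h1

lemma pureProd_isCompact (m₁ m₂ : ℕ) :
    IsCompact ((fun x : (Fin m₁ → ℂ) × (Fin m₂ → ℂ) => proj (tens x.1 x.2)) ''
      ({ψ | ∑ j, ‖ψ j‖^2 = 1} ×ˢ {φ | ∑ j, ‖φ j‖^2 = 1})) := by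
  apply IsCompact.image ((sphere_isCompact m₁).prod (sphere_isCompact m₂))
  apply continuous_pi; intro p; apply continuous_pi; intro q
  show Continuous fun x : (Fin m₁ → ℂ) × (Fin m₂ → ℂ) =>
    (x.1 p.1 * x.2 p.2) * star (x.1 q.1 * x.2 q.2)
  fun_prop

section dim
variable {n : Type*} [Fintype n] [DecidableEq n]

instance matFD : FiniteDimensional ℝ (Matrix n n ℂ) := by
  have : Module.Finite ℝ ℂ := inferInstance
  infer_instance

/-- Hermitian trace-zero matrices as a real submodule. -/
def hermTraceZero (n : Type*) [Fintype n] [DecidableEq n] : Submodule ℝ (Matrix n n ℂ) where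
  carrier := {M | Mᴴ = M ∧ M.trace = 0}
  zero_mem' := ⟨by simp, by simp⟩
  add_mem' := by
    rintro a b ⟨ha1, ha2⟩ ⟨hb1, hb2⟩
    exact ⟨by rw [conjTranspose_add, ha1, hb1], by rw [trace_add, ha2, hb2, add_zero]⟩
  smul_mem' := by
    rintro c a ⟨ha1, ha2⟩
    constructor
    · ext i j
      simp only [conjTranspose_apply, Matrix.smul_apply, star_smul, star_trivial]
      rw [← conjTranspose_apply, ha1]
    · rw [trace_smul, ha2, smul_zero]

/-- The real-linear "realification" map injective on Hermitian matrices. -/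
def realify (n : Type*) [Fintype n] [DecidableEq n] : Matrix n n ℂ →ₗ[ℝ] ((n × n) → ℝ) where
  toFun M := fun pq => if (Fintype.equivFin n) pq.1 ≤ (Fintype.equivFin n) pq.2
    then (M pq.1 pq.2).re else (M pq.1 pq.2).im
  map_add' a b := by
    funext pq
    by_cases h : (Fintype.equivFin n) pq.1 ≤ (Fintype.equivFin n) pq.2 <;>
      simp [h, Matrix.add_apply]
  map_smul' c a := by
    funext pq
    by_cases h : (Fintype.equivFin n) pq.1 ≤ (Fintype.equivFin n) pq.2 <;>
      simp [h, Matrix.smul_apply, Complex.real_smul, Complex.mul_re, Complex.mul_im]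

lemma realify_inj {M : Matrix n n ℂ} (hM : Mᴴ = M) (h0 : realify n M = 0) : M = 0 := by
  have key : ∀ i j, (Fintype.equivFin n) i ≤ (Fintype.equivFin n) j → M i j = 0 := by
    intro i j hij
    have hre : (M i j).re = 0 := by
      have := congrFun h0 (i, j)
      simpa [realify, hij] using this
    by_cases hji : (Fintype.equivFin n) j ≤ (Fintype.equivFin n) i
    · -- i = j
      have hij' : i = j := (Fintype.equivFin n).injective (le_antisymm hij hji)
      subst hij'
      have him : (M i i).im = 0 := by
        have h := congrFun (congrFun hM i) i
        rw [conjTranspose_apply] at h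
        have := congrArg Complex.im h
        simp only [Complex.star_def, Complex.conj_im] at this
        linarith
      exact Complex.ext hre him
    · have him : (M i j).im = 0 := by
        have h2 := congrFun h0 (j, i)
        simp only [realify, LinearMap.coe_mk, AddHom.coe_mk, if_neg hji, Pi.zero_apply] at h2
        have h := congrFun (congrFun hM j) i
        rw [conjTranspose_apply] at h
        have := congrArg Complex.im h
        simp only [Complex.star_def, Complex.conj_im] at this
        linarith
      exact Complex.ext hre him
  ext i j
  rcases le_total ((Fintype.equivFin n) i) ((Fintype.equivFin n) j) with h | h
  · simpa using key i j h
  · have := key j i h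
    have h2 := congrFun (congrFun hM j) i
    rw [conjTranspose_apply, this] at h2
    exact star_eq_zero.mp h2

lemma finrank_hermTraceZero_le [Nonempty n] :
    Module.finrank ℝ (hermTraceZero n) ≤ Fintype.card n ^ 2 - 1 := by
  classical
  -- trace functional on realified side
  let T : ((n × n) → ℝ) →ₗ[ℝ] ℝ :=
    { toFun := fun x => ∑ i, x (i, i)
      map_add' := fun a b => by simp [Finset.sum_add_distrib]
      map_smul' := fun c a => by simp [Finset.mul_sum] }
  let L : hermTraceZero n →ₗ[ℝ] ((n × n) → ℝ) := (realify n).comp (hermTraceZero n).subtype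
  have hLinj : Function.Injective L := by
    intro a b hab
    have hab' : realify n (a : Matrix n n ℂ) = realify n (b : Matrix n n ℂ) := hab
    have hz : realify n ((a : Matrix n n ℂ) - (b : Matrix n n ℂ)) = 0 := by
      rw [map_sub, hab', sub_self]
    have hherm : ((a : Matrix n n ℂ) - (b : Matrix n n ℂ))ᴴ
        = (a : Matrix n n ℂ) - (b : Matrix n n ℂ) := by
      rw [conjTranspose_sub, a.2.1, b.2.1]
    have := realify_inj hherm hz
    exact Subtype.ext (by rwa [sub_eq_zero] at this)
  have hrange : LinearMap.range L ≤ LinearMap.ker T := by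
    rintro x ⟨a, rfl⟩
    have htr : (a : Matrix n n ℂ).trace = 0 := a.2.2
    simp only [LinearMap.mem_ker]
    show ∑ i, (L a) (i, i) = 0
    have : ∀ i, (L a) (i, i) = ((a : Matrix n n ℂ) i i).re := by
      intro i
      simp [L, realify]
    rw [Finset.sum_congr rfl fun i _ => this i]
    have := congrArg Complex.re htr
    rw [Matrix.trace] at this
    simpa [Complex.re_sum, Matrix.diag] using this
  have hT : LinearMap.ker T < ⊤ := by
    rw [lt_top_iff_ne_top]
    intro h
    have h1 : T (fun _ => 1) = 0 := by
      rw [← LinearMap.mem_ker, h]; trivial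
    have h2 : T (fun _ => 1) = (Fintype.card n : ℝ) := by
      simp [T]
    rw [h1] at h2
    exact Fintype.card_ne_zero (by exact_mod_cast h2.symm)
  have h1 : Module.finrank ℝ (hermTraceZero n) = Module.finrank ℝ (LinearMap.range L) :=
    (LinearMap.finrank_range_of_inj hLinj).symm
  have h2 : Module.finrank ℝ (LinearMap.range L) ≤ Module.finrank ℝ (LinearMap.ker T) :=
    Submodule.finrank_mono hrange
  have h3 : Module.finrank ℝ (LinearMap.ker T) < Module.finrank ℝ ((n × n) → ℝ) :=
    Submodule.finrank_lt hT.ne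
  have h4 : Module.finrank ℝ ((n × n) → ℝ) = Fintype.card n ^ 2 := by
    rw [Module.finrank_fintype_fun_eq_card, Fintype.card_prod, sq]
  omega


lemma herm_card_le [Nonempty n] (t : Finset (Matrix n n ℂ))
    (hherm : ∀ M ∈ t, Mᴴ = M) (htr : ∀ M ∈ t, M.trace = 1)
    (hai : AffineIndependent ℝ ((↑) : t → Matrix n n ℂ)) :
    t.card ≤ Fintype.card n ^ 2 := by
  rcases Nat.eq_zero_or_pos t.card with h | h
  · omega
  obtain ⟨c, hc⟩ : ∃ c, t.card = c + 1 := ⟨t.card - 1, by omega⟩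
  have hcard : Fintype.card ↥t = c + 1 := by rw [Fintype.card_coe]; exact hc
  have hfr := hai.finrank_vectorSpan hcard
  have hle : vectorSpan ℝ (Set.range ((↑) : ↥t → Matrix n n ℂ)) ≤ hermTraceZero n := by
    rw [vectorSpan_def, Submodule.span_le]
    rintro v ⟨x, hx, y, hy, rfl⟩
    obtain ⟨x', rfl⟩ := hx
    obtain ⟨y', rfl⟩ := hy
    simp only [vsub_eq_sub]
    refine ⟨?_, ?_⟩
    · rw [conjTranspose_sub, hherm _ x'.2, hherm _ y'.2]
    · rw [trace_sub, htr _ x'.2, htr _ y'.2, sub_self]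
  have hmono := Submodule.finrank_mono hle
  rw [hfr] at hmono
  have h2 := finrank_hermTraceZero_le (n := n)
  have h3 : 0 < Fintype.card n ^ 2 := pow_pos Fintype.card_pos 2
  omega

lemma pad_sum {M : Type*} [AddCommMonoid M] {c k : ℕ} (hck : c ≤ k) (g : Fin c → M) :
    ∑ i : Fin k, (if h : (i : ℕ) < c then g ⟨i, h⟩ else 0) = ∑ i : Fin c, g i := by
  rw [Fin.sum_univ_eq_sum_range (fun i => if h : i < c then g ⟨i, h⟩ else 0) k]
  rw [show ∑ i : Fin c, g i
      = ∑ i : Fin c, (fun i : ℕ => if h : i < c then g ⟨i, h⟩ else 0) ↑i from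
    Finset.sum_congr rfl fun i _ => by simp [i.isLt]]
  rw [Fin.sum_univ_eq_sum_range (fun i => if h : i < c then g ⟨i, h⟩ else 0) c]
  exact (Finset.sum_subset (Finset.range_subset_range.mpr hck)
    (fun x _ hx => dif_neg (by simpa using hx))).symm

end dim

section rest
variable {m₁ m₂ : ℕ}

lemma pureProd_herm {σ : Matrix (Fin m₁ × Fin m₂) (Fin m₁ × Fin m₂) ℂ}
    (h : σ ∈ pureProd m₁ m₂) : σᴴ = σ ∧ σ.trace = 1 := by
  obtain ⟨⟨ψ, φ⟩, ⟨hψ, hφ⟩, rfl⟩ := h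
  constructor
  · ext p q
    simp only [conjTranspose_apply, proj, star_mul', star_star]
    ring
  · rw [proj_trace]
    have : ∑ p : Fin m₁ × Fin m₂, ‖tens ψ φ p‖^2 = 1 := by
      simp only [tens, norm_mul, mul_pow, Fintype.sum_prod_type, ← Finset.mul_sum]
      have hφ' : ∑ j, ‖φ j‖^2 = 1 := hφ
      have hψ' : ∑ j, ‖ψ j‖^2 = 1 := hψ
      rw [hφ']
      simp only [mul_one]
      exact hψ'
    rw [this, Complex.ofReal_one]

lemma carat (h1 : 0 < m₁) (h2 : 0 < m₂)
    {ρ : Matrix (Fin m₁ × Fin m₂) (Fin m₁ × Fin m₂) ℂ}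
    (hρ : ρ ∈ convexHull ℝ (pureProd m₁ m₂)) :
    ∃ (w : Fin ((m₁ * m₂) ^ 2) → ℝ)
      (z : Fin ((m₁ * m₂) ^ 2) → Matrix (Fin m₁ × Fin m₂) (Fin m₁ × Fin m₂) ℂ),
      (∀ i, 0 ≤ w i) ∧ ∑ i, w i = 1 ∧ (∀ i, z i ∈ pureProd m₁ m₂) ∧
      ρ = ∑ i, w i • z i := by
  haveI : Nonempty (Fin m₁ × Fin m₂) := ⟨(⟨0, h1⟩, ⟨0, h2⟩)⟩
  rw [convexHull_eq_union] at hρ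
  simp only [Set.mem_iUnion, exists_prop] at hρ
  obtain ⟨t, ht, hai, hρt⟩ := hρ
  have hcard : t.card ≤ (m₁ * m₂) ^ 2 := by
    have := herm_card_le t (fun M hM => (pureProd_herm (ht hM)).1)
      (fun M hM => (pureProd_herm (ht hM)).2) hai
    simpa using this
  rcases t.eq_empty_or_nonempty with rfl | hne
  · simp at hρt
  rw [Finset.convexHull_eq] at hρt
  obtain ⟨w', hw0, hw1, hcm⟩ := hρt
  rw [Finset.centerMass_eq_of_sum_1 _ id hw1] at hcm
  obtain ⟨z₀, hz₀⟩ := hne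
  set e := t.equivFin with he
  refine ⟨fun i => if h : (i : ℕ) < t.card then w' (e.symm ⟨i, h⟩) else 0,
    fun i => if h : (i : ℕ) < t.card then (e.symm ⟨i, h⟩ : _) else z₀,
    fun i => ?_, ?_, fun i => ?_, ?_⟩
  · by_cases h : (i : ℕ) < t.card
    · simpa [h] using hw0 _ (e.symm ⟨i, h⟩).2
    · simp [h]
  · rw [pad_sum hcard (fun j => w' (e.symm j))]
    rw [Equiv.sum_comp e.symm (fun x : ↥t => w' ↑x)]
    rw [Finset.sum_coe_sort t (fun y => w' y)]
    exact hw1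
  · by_cases h : (i : ℕ) < t.card
    · simpa [h] using ht (e.symm ⟨i, h⟩).2
    · simpa [h] using ht hz₀
  · have hfn : (fun i : Fin ((m₁ * m₂) ^ 2) =>
        (if h : (i : ℕ) < t.card then w' (e.symm ⟨i, h⟩) else 0) •
        (if h : (i : ℕ) < t.card then ((e.symm ⟨i, h⟩ : _) :
            Matrix (Fin m₁ × Fin m₂) (Fin m₁ × Fin m₂) ℂ) else z₀))
        = fun i : Fin ((m₁ * m₂) ^ 2) => if h : (i : ℕ) < t.card
            then (fun j : Fin t.card => w' (e.symm j) •
              ((e.symm j : _) : Matrix (Fin m₁ × Fin m₂) (Fin m₁ × Fin m₂) ℂ)) ⟨i, h⟩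
            else 0 := by
      funext i
      by_cases h : (i : ℕ) < t.card <;> simp [h]
    rw [hfn, pad_sum hcard (fun j : Fin t.card => w' (e.symm j) •
      ((e.symm j : _) : Matrix (Fin m₁ × Fin m₂) (Fin m₁ × Fin m₂) ℂ))]
    rw [Equiv.sum_comp e.symm (fun x : ↥t => w' ↑x •
      ((x : _) : Matrix (Fin m₁ × Fin m₂) (Fin m₁ × Fin m₂) ℂ))]
    rw [Finset.sum_coe_sort t (fun y => w' y • y)]
    simpa using hcm.symm

lemma coe_smul_mat {n : Type*} (r : ℝ) (M : Matrix n n ℂ) : (r : ℂ) • M = r • M := by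
  ext i j
  simp [Matrix.smul_apply, Complex.real_smul]

end rest

theorem separable_ensemble_and_partial_transpose {m₁ m₂ : ℕ}
    (ρ : Matrix (Fin m₁ × Fin m₂) (Fin m₁ × Fin m₂) ℂ)
    (hρ : IsState ρ) (hsep : IsSepState ρ) :
    ∃ N : ℕ, N ≤ (m₁ * m₂) ^ 2 ∧
      ∃ (ψ : Fin N → Fin m₁ → ℂ) (φ : Fin N → Fin m₂ → ℂ) (p : Fin N → ℝ),
        (∀ i, ∑ j, ‖ψ i j‖ ^ 2 = 1) ∧
        (∀ i, ∑ j, ‖φ i j‖ ^ 2 = 1) ∧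
        (∀ i, 0 ≤ p i) ∧ (∑ i, p i) = 1 ∧
        ρ = ∑ i, (p i : ℂ) • proj (tens (ψ i) (φ i)) ∧
        pt₂ ρ = ∑ i, (p i : ℂ) • proj (tens (ψ i) (fun j => star (φ i j))) := by
  rcases Nat.eq_zero_or_pos m₁ with hm1 | hm1
  · exfalso
    subst hm1
    have h0 : ρ.trace = 0 := by simp [Matrix.trace]
    exact one_ne_zero (hρ.2.symm.trans h0)
  rcases Nat.eq_zero_or_pos m₂ with hm2 | hm2
  · exfalso
    subst hm2
    have h0 : ρ.trace = 0 := by simp [Matrix.trace]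
    exact one_ne_zero (hρ.2.symm.trans h0)
  have hGc : Continuous (fun x : (Fin ((m₁*m₂)^2) → ℝ) ×
      (Fin ((m₁*m₂)^2) → Matrix (Fin m₁ × Fin m₂) (Fin m₁ × Fin m₂) ℂ) =>
      ∑ i, x.1 i • x.2 i) := by
    apply continuous_finset_sum
    intro i _
    exact ((continuous_apply i).comp continuous_fst).smul
      ((continuous_apply i).comp continuous_snd)
  have hQc : IsCompact ((stdSimplex ℝ (Fin ((m₁*m₂)^2))) ×ˢ
      (Set.univ.pi fun _ : Fin ((m₁*m₂)^2) => pureProd m₁ m₂)) :=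
    (isCompact_stdSimplex _ _).prod (isCompact_univ_pi fun _ => pureProd_isCompact m₁ m₂)
  have hclosed := (hQc.image hGc).isClosed
  have hS : {σ : Matrix (Fin m₁ × Fin m₂) (Fin m₁ × Fin m₂) ℂ |
      ∃ (A : Matrix (Fin m₁) (Fin m₁) ℂ) (B : Matrix (Fin m₂) (Fin m₂) ℂ),
        IsState A ∧ IsState B ∧ σ = A ⊗ₖ B} ⊆ convexHull ℝ (pureProd m₁ m₂) := by
    rintro σ ⟨A, B, hA, hB, rfl⟩
    exact prodState_mem_convexHull hA hB
  have hhull : convexHull ℝ (pureProd m₁ m₂) ⊆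
      (fun x : (Fin ((m₁*m₂)^2) → ℝ) ×
        (Fin ((m₁*m₂)^2) → Matrix (Fin m₁ × Fin m₂) (Fin m₁ × Fin m₂) ℂ) =>
        ∑ i, x.1 i • x.2 i) '' ((stdSimplex ℝ (Fin ((m₁*m₂)^2))) ×ˢ
        (Set.univ.pi fun _ : Fin ((m₁*m₂)^2) => pureProd m₁ m₂)) := by
    intro y hy
    obtain ⟨w, z, h0, h1, hz, hsum⟩ := carat hm1 hm2 hy
    exact ⟨(w, z), ⟨⟨h0, h1⟩, fun i _ => hz i⟩, hsum.symm⟩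
  have hρmem := closure_minimal
    ((convexHull_min hS (convex_convexHull ℝ _)).trans hhull) hclosed hsep
  obtain ⟨⟨w, z⟩, ⟨⟨hw0, hw1⟩, hzmem⟩, hGz⟩ := hρmem
  have hz : ∀ i, z i ∈ pureProd m₁ m₂ := fun i => hzmem i (Set.mem_univ i)
  choose x hx hproj using hz
  have hρsum : ρ = ∑ i, w i • z i := by simpa using hGz.symm
  have hdec : ρ = ∑ i, (w i : ℂ) • proj (tens (x i).1 (x i).2) := by
    rw [hρsum]
    exact Finset.sum_congr rfl fun i _ => by rw [← hproj i, coe_smul_mat]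
  refine ⟨(m₁*m₂)^2, le_refl _, fun i => (x i).1, fun i => (x i).2, w,
    fun i => (hx i).1, fun i => (hx i).2, hw0, hw1, hdec, ?_⟩
  ext p q
  show ρ (p.1, q.2) (q.1, p.2) = _
  rw [hdec]
  simp only [Matrix.sum_apply, Matrix.smul_apply, smul_eq_mul]
  refine Finset.sum_congr rfl fun i _ => ?_
  congr 1
  simp only [proj, tens, star_mul', star_star]
  ring
end
end

section
/- The partial transposition ρ_insep^{T₂} of the state ρ_insep on ℂ³ ⊗ ℂ³ is not positive semidefinite: there is a vector v (one may take v = e₁⊗e₃ − ((1+√5)/2) e₃⊗e₁) with ⟨v, ρ_insep^{T₂} v⟩ < 0. Consequently ρ_insep is not separable. -/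
open scoped ComplexOrder
open Matrix Kronecker

noncomputable section

/-- Standard basis vectors of `ℂ^n`. -/
def e (n : ℕ) (i : Fin n) : Fin n → ℂ := fun j => if j = i then 1 else 0

/-- The maximally entangled vector `Ψ = (e₁⊗e₁ + e₂⊗e₂ + e₃⊗e₃)/√3`. -/
def Ψ3 : Fin 3 × Fin 3 → ℂ :=
  (Real.sqrt 3 : ℂ)⁻¹ •
    (tens (e 3 0) (e 3 0) + tens (e 3 1) (e 3 1) + tens (e 3 2) (e 3 2))

/-- The projector `Q = I⊗I − (Σ_i P_{e_i⊗e_i} + P_{e₃⊗e₁})`. -/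
def Q3 : Matrix (Fin 3 × Fin 3) (Fin 3 × Fin 3) ℂ :=
  1 - (∑ i : Fin 3, proj (tens (e 3 i) (e 3 i)) + proj (tens (e 3 2) (e 3 0)))

/-- The inseparable state `ρ_insep = (3/8) P_Ψ + (1/8) Q`. -/
def ρinsep : Matrix (Fin 3 × Fin 3) (Fin 3 × Fin 3) ℂ :=
  (3 / 8 : ℂ) • proj Ψ3 + (1 / 8 : ℂ) • Q3

/-- The product vector `Φ_a = e₃ ⊗ (√((1+a)/2) e₁ + √((1−a)/2) e₃)`. -/
def Φa (a : ℝ) : Fin 3 × Fin 3 → ℂ :=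
  tens (e 3 2) (fun j =>
    if j = 0 then (Real.sqrt ((1 + a) / 2) : ℂ)
    else if j = 2 then (Real.sqrt ((1 - a) / 2) : ℂ) else 0)

/-- The Horodecki state `ρ_a = (8a/(8a+1)) ρ_insep + (1/(8a+1)) P_{Φ_a}`. -/
def ρA (a : ℝ) : Matrix (Fin 3 × Fin 3) (Fin 3 × Fin 3) ℂ :=
  ((8 * a / (8 * a + 1) : ℝ) : ℂ) • ρinsep +
    ((1 / (8 * a + 1) : ℝ) : ℂ) • proj (Φa a)

set_option linter.unusedSectionVars false

section Aux
variable {n m : Type*} [Fintype n] [DecidableEq n] [Fintype m] [DecidableEq m]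

lemma kron_conjTranspose (A : Matrix n n ℂ) (B : Matrix m m ℂ) :
    (A ⊗ₖ B)ᴴ = Aᴴ ⊗ₖ Bᴴ := by
  ext ⟨i, μ⟩ ⟨j, ν⟩
  simp [Matrix.conjTranspose_apply, mul_comm]

lemma kron_posSemidef {A : Matrix n n ℂ} {B : Matrix m m ℂ}
    (hA : A.PosSemidef) (hB : B.PosSemidef) : (A ⊗ₖ B).PosSemidef := by
  exact Matrix.PosSemidef.kronecker hA hB

lemma psd_real_smul {M : Matrix n n ℂ} (hM : M.PosSemidef) {a : ℝ} (ha : 0 ≤ a) :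
    (a • M).PosSemidef := by
  refine Matrix.PosSemidef.of_dotProduct_mulVec_nonneg ?_ ?_
  · show (a • M)ᴴ = a • M
    rw [Matrix.conjTranspose_smul, star_trivial, hM.1]
  · intro x
    rw [Matrix.smul_mulVec, dotProduct_smul]
    have := hM.dotProduct_mulVec_nonneg x
    rw [show a • (star x ⬝ᵥ M.mulVec x) = (a : ℂ) * (star x ⬝ᵥ M.mulVec x) from
      Complex.real_smul]
    exact mul_nonneg (by exact_mod_cast ha) this

lemma isClosed_psd : IsClosed {M : Matrix n n ℂ | M.PosSemidef} := by
  have h : {M : Matrix n n ℂ | M.PosSemidef} =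
      {M : Matrix n n ℂ | Mᴴ = M} ∩
        ⋂ x : n → ℂ, {M : Matrix n n ℂ | star x ⬝ᵥ M.mulVec x ∈ Set.Ici (0 : ℂ)} := by
    ext M
    simp [Matrix.posSemidef_iff_dotProduct_mulVec, Matrix.IsHermitian, Set.mem_iInter]
  rw [h]
  refine IsClosed.inter (isClosed_eq ?_ continuous_id) (isClosed_iInter fun x => ?_)
  · exact continuous_pi fun i => continuous_pi fun j => by
      show Continuous fun M : Matrix n n ℂ => star (M j i)
      have : Continuous fun M : Matrix n n ℂ => M j i :=
        (continuous_apply (A := fun _ : n => ℂ) i).comp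
          (continuous_apply (A := fun _ : n => n → ℂ) j)
      exact this.star
  · have hc : Continuous fun M : Matrix n n ℂ => star x ⬝ᵥ M.mulVec x := by
      have h2 : (fun M : Matrix n n ℂ => star x ⬝ᵥ M.mulVec x) =
          fun M => ∑ i, star (x i) * ∑ j, M i j * x j := by
        funext M; simp [dotProduct, Matrix.mulVec]
      rw [h2]
      exact continuous_finset_sum _ fun i _ => continuous_const.mul
        (continuous_finset_sum _ fun j _ =>
          (((continuous_apply (A := fun _ : n => ℂ) j).comp
            (continuous_apply (A := fun _ : n => n → ℂ) i)).mul continuous_const))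
    exact (isClosed_Ici (a := (0:ℂ))).preimage hc

end Aux


lemma pt₂_kron {m₁ m₂ : ℕ} (A : Matrix (Fin m₁) (Fin m₁) ℂ) (B : Matrix (Fin m₂) (Fin m₂) ℂ) :
    pt₂ (A ⊗ₖ B) = A ⊗ₖ Bᵀ := by
  ext ⟨i, μ⟩ ⟨j, ν⟩; rfl

lemma pt₂_continuous {m₁ m₂ : ℕ} :
    Continuous (pt₂ : Matrix (Fin m₁ × Fin m₂) (Fin m₁ × Fin m₂) ℂ →
      Matrix (Fin m₁ × Fin m₂) (Fin m₁ × Fin m₂) ℂ) := by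
  refine continuous_pi fun p => continuous_pi fun q => ?_
  exact (continuous_apply (A := fun _ : Fin m₁ × Fin m₂ => ℂ) (q.1, p.2)).comp
    (continuous_apply (A := fun _ : Fin m₁ × Fin m₂ => Fin m₁ × Fin m₂ → ℂ) (p.1, q.2))

lemma h3aux : ((Real.sqrt 3 : ℝ) : ℂ)⁻¹ * ((Real.sqrt 3 : ℝ) : ℂ)⁻¹ = 1/3 := by
  rw [← mul_inv]; norm_cast
  rw [Real.mul_self_sqrt (by norm_num)]; norm_num

lemma entA : ρinsep (0,2) (0,2) = 1/8 := by
  simp [ρinsep, proj, Q3, Ψ3, tens, e, Fin.sum_univ_three, Matrix.one_apply]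

lemma entB : ρinsep (0,0) (2,2) = 1/8 := by
  simp [ρinsep, proj, Q3, Ψ3, tens, e, Fin.sum_univ_three, Matrix.one_apply, h3aux,
    Prod.ext_iff]
  norm_num [h3aux]

lemma entC : ρinsep (2,2) (0,0) = 1/8 := by
  simp [ρinsep, proj, Q3, Ψ3, tens, e, Fin.sum_univ_three, Matrix.one_apply, h3aux,
    Prod.ext_iff]
  norm_num [h3aux]

lemma entD : ρinsep (2,0) (2,0) = 0 := by
  simp [ρinsep, proj, Q3, Ψ3, tens, e, Fin.sum_univ_three, Matrix.one_apply]

lemma quadval :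
    (star (tens (e 3 0) (e 3 2) - (((1 + Real.sqrt 5) / 2 : ℝ) : ℂ) • tens (e 3 2) (e 3 0)) ⬝ᵥ
        (pt₂ ρinsep).mulVec
          (tens (e 3 0) (e 3 2) - (((1 + Real.sqrt 5) / 2 : ℝ) : ℂ) • tens (e 3 2) (e 3 0)))
      = ((-(Real.sqrt 5) / 8 : ℝ) : ℂ) := by
  have hA : pt₂ ρinsep (0,2) (0,2) = 1/8 := entA
  have hB : pt₂ ρinsep (0,2) (2,0) = 1/8 := entB
  have hC : pt₂ ρinsep (2,0) (0,2) = 1/8 := entC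
  have hD : pt₂ ρinsep (2,0) (2,0) = 0 := entD
  generalize hM : pt₂ ρinsep = M at hA hB hC hD
  simp only [dotProduct, Matrix.mulVec, Fintype.sum_prod_type, Fin.sum_univ_three,
    Pi.sub_apply, Pi.smul_apply, Pi.star_apply, tens, e, smul_eq_mul]
  norm_num
  rw [hA, hB, hC, hD]
  push_cast
  ring_nf
  simp [map_zero]

/-- The partial transposition of `ρ_insep` is not positive
semidefinite: the vector `v = e₁⊗e₃ − ((1+√5)/2) e₃⊗e₁` witnesses
`⟨v, ρ_insep^{T₂} v⟩ < 0`. Consequently `ρ_insep` is not separable. -/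
theorem ρinsep_pt₂_not_posSemidef :
    (star (tens (e 3 0) (e 3 2) - (((1 + Real.sqrt 5) / 2 : ℝ) : ℂ) • tens (e 3 2) (e 3 0)) ⬝ᵥ
        (pt₂ ρinsep).mulVec
          (tens (e 3 0) (e 3 2) - (((1 + Real.sqrt 5) / 2 : ℝ) : ℂ) • tens (e 3 2) (e 3 0))
      < 0) ∧
    ¬ (pt₂ ρinsep).PosSemidef ∧ ¬ IsSepState ρinsep := by
  have hltR : (-(Real.sqrt 5) / 8 : ℝ) < 0 := by
    have := Real.sqrt_pos.mpr (by norm_num : (0:ℝ) < 5)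
    linarith
  have hlt :
      (star (tens (e 3 0) (e 3 2) - (((1 + Real.sqrt 5) / 2 : ℝ) : ℂ) • tens (e 3 2) (e 3 0)) ⬝ᵥ
        (pt₂ ρinsep).mulVec
          (tens (e 3 0) (e 3 2) - (((1 + Real.sqrt 5) / 2 : ℝ) : ℂ) • tens (e 3 2) (e 3 0))
      < 0) := by
    rw [quadval]
    exact_mod_cast hltR
  refine ⟨hlt, fun hpsd => absurd (hpsd.dotProduct_mulVec_nonneg
    (tens (e 3 0) (e 3 2) - (((1 + Real.sqrt 5) / 2 : ℝ) : ℂ) • tens (e 3 2) (e 3 0)))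
    hlt.not_ge, fun hsep => ?_⟩
  have hsub : closure (convexHull ℝ
      {σ : Matrix (Fin 3 × Fin 3) (Fin 3 × Fin 3) ℂ |
        ∃ (A : Matrix (Fin 3) (Fin 3) ℂ) (B : Matrix (Fin 3) (Fin 3) ℂ),
          IsState A ∧ IsState B ∧ σ = A ⊗ₖ B}) ⊆
      {ρ : Matrix (Fin 3 × Fin 3) (Fin 3 × Fin 3) ℂ | (pt₂ ρ).PosSemidef} := by
    refine closure_minimal (convexHull_min ?_ ?_) (isClosed_psd.preimage pt₂_continuous)
    · rintro σ ⟨A, B, hA, hB, rfl⟩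
      show (pt₂ (A ⊗ₖ B)).PosSemidef
      rw [pt₂_kron]
      exact kron_posSemidef hA.1 hB.1.transpose
    · intro M hM N hN a b ha hb hab
      show (pt₂ (a • M + b • N)).PosSemidef
      have hrw : pt₂ (a • M + b • N) = a • pt₂ M + b • pt₂ N := rfl
      rw [hrw]
      exact (psd_real_smul hM ha).add (psd_real_smul hN hb)
  have hpsd : (pt₂ ρinsep).PosSemidef := hsub hsep
  exact absurd (hpsd.dotProduct_mulVec_nonneg
    (tens (e 3 0) (e 3 2) - (((1 + Real.sqrt 5) / 2 : ℝ) : ℂ) • tens (e 3 2) (e 3 0)))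
    hlt.not_ge
end
end
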